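/- Let R be a discrete valuation ring with uniformizer p and residue field k, and let X be an object of C_R such that End(X) is a finitely generated free R-module and End(X) ⊗_R k is one-dimensional over k (equivalently, End(X) = R·id_X + 𝔪·End(X)). Then the ideal of R generated by {Tr_X(a) : a ∈ End(X)} equals the principal ideal (dim(X)). In particular, X ∈ N_k if and only if p^k divides dim(X), so the nullity of X equals v_p(dim(X)). -/

import Mathlib

/-!
STATEMENT 7. Let `R` be a discrete valuation ring with uniformizer `p` and residue
field `k`, and let `X` be an object of `C_R` such that `End(X)` is a finitely
generated free `R`-module and `End(X) ⊗_R k` is one-dimensional over `k`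
(equivalently, `End(X) = R·id_X + 𝔪·End(X)`).  Then the ideal of `R` generated by
`{Tr_X(a) : a ∈ End(X)}` equals the principal ideal `(dim(X))`.  In particular
`X ∈ N_k` if and only if `p^k ∣ dim(X)`, so the nullity of `X` equals
`v_p(dim(X))`.
-/

open CategoryTheory MonoidalCategory

/-- A rigid spherical monoidal `R`-linear category, encoded through its spherical
trace functions on endomorphisms and their standard properties. -/
structure SphericalTraceData (R : Type*) [CommRing R] (C : Type*) [Category C]
    [MonoidalCategory C] [Preadditive C] [Linear R C] where
  /-- the spherical trace of an endomorphism, an `R`-linear function -/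
  tr : ∀ X : C, (X ⟶ X) →ₗ[R] R
  /-- cyclicity of the trace -/
  tr_comm : ∀ {X Y : C} (f : X ⟶ Y) (g : Y ⟶ X), tr X (f ≫ g) = tr Y (g ≫ f)
  /-- `End (𝟙_ C) = R` -/
  tr_unit : ∀ f : 𝟙_ C ⟶ 𝟙_ C, f = tr (𝟙_ C) f • 𝟙 (𝟙_ C)
  /-- multiplicativity of the trace on tensor products -/
  tr_tensor : ∀ {X Y : C} (a : X ⟶ X) (b : Y ⟶ Y),
      tr (X ⊗ Y) (a ⊗ₘ b) = tr X a * tr Y b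
  /-- the partial trace (conditional expectation) onto the first factor -/
  E : ∀ X Y : C, (X ⊗ Y ⟶ X ⊗ Y) →ₗ[R] (X ⟶ X)
  tr_E : ∀ {X Y : C} (a : X ⊗ Y ⟶ X ⊗ Y), tr X (E X Y a) = tr (X ⊗ Y) a
  /-- the partial trace (conditional expectation) onto the second factor -/
  E' : ∀ X Y : C, (X ⊗ Y ⟶ X ⊗ Y) →ₗ[R] (Y ⟶ Y)
  tr_E' : ∀ {X Y : C} (a : X ⊗ Y ⟶ X ⊗ Y), tr Y (E' X Y a) = tr (X ⊗ Y) a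
  /-- rigidity/sphericality: a trace against a tensor product morphism `f ⊗ g`
  can be rewritten as a trace against `f` alone (Barrett–Westbury) -/
  tensorHom_trace_right : ∀ {X Y W Z : C} (f : X ⟶ Y) (g : W ⟶ Z) (h : Y ⊗ Z ⟶ X ⊗ W),
      ∃ h' : Y ⟶ X, tr (X ⊗ W) ((f ⊗ₘ g) ≫ h) = tr X (f ≫ h')
  tensorHom_trace_left : ∀ {X Y W Z : C} (f : X ⟶ Y) (g : W ⟶ Z) (h : Z ⊗ Y ⟶ W ⊗ X),
      ∃ h' : Y ⟶ X, tr (W ⊗ X) ((g ⊗ₘ f) ≫ h) = tr X (f ≫ h')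

/-- A thick (tensor) ideal of a monoidal category: a class of objects closed under
tensoring with arbitrary objects on either side and under retracts. -/
structure IsThickIdeal {C : Type*} [Category C] [MonoidalCategory C] (I : Set C) : Prop where
  tensor_right : ∀ X ∈ I, ∀ Y : C, X ⊗ Y ∈ I
  tensor_left : ∀ X ∈ I, ∀ Y : C, Y ⊗ X ∈ I
  retract : ∀ {X Y : C}, Y ∈ I → ∀ (α : X ⟶ Y) (β : Y ⟶ X), α ≫ β = 𝟙 X → X ∈ I

variable {R : Type*} [CommRing R] {C : Type*} [Category C] [MonoidalCategory C]
  [Preadditive C] [Linear R C]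

/-- An object `X` is `I`-negligible if `Tr_X a ∈ I` for every endomorphism `a` of `X`. -/
def IsNegligibleObj (Θ : SphericalTraceData R C) (I : Ideal R) (X : C) : Prop :=
  ∀ a : X ⟶ X, Θ.tr X a ∈ I

/-- The nullity of an object: the largest `k` with `X ∈ N_k` (as an element of `ℕ∞`). -/
noncomputable def nullity (Θ : SphericalTraceData R C) (p : R) (X : C) : ℕ∞ :=
  ⨆ k ∈ {k : ℕ | IsNegligibleObj Θ (Ideal.span {p} ^ k) X}, (k : ℕ∞)

theorem trace_ideal_of_local_end [IsDomain R] [IsDiscreteValuationRing R]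
    (p : R) (hp : Irreducible p) (Θ : SphericalTraceData R C) (X : C)
    (hfree : Module.Free R (X ⟶ X)) (hfin : Module.Finite R (X ⟶ X))
    -- `End(X) = R·id_X + 𝔪·End(X)`, i.e. `End(X) ⊗ R/𝔪` is one-dimensional
    (hEnd : ∀ a : X ⟶ X, ∃ r : R,
        a - r • 𝟙 X ∈ (IsLocalRing.maximalIdeal R • ⊤ : Submodule R (X ⟶ X))) :
    -- the ideal generated by all traces of endomorphisms of `X` is `(dim X)`
    Ideal.span (Set.range (Θ.tr X)) = Ideal.span {Θ.tr X (𝟙 X)} ∧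
    -- in particular `X ∈ N_k ↔ p^k ∣ dim X`
    (∀ k : ℕ, IsNegligibleObj Θ (Ideal.span {p} ^ k) X ↔ p ^ k ∣ Θ.tr X (𝟙 X)) ∧
    -- so the nullity of `X` is the `p`-adic valuation of `dim X`
    nullity Θ p X = ⨆ k ∈ {k : ℕ | p ^ k ∣ Θ.tr X (𝟙 X)}, (k : ℕ∞) := by
  classical
  set d := Θ.tr X (𝟙 X) with hd
  set I : Ideal R := Ideal.span (Set.range (Θ.tr X)) with hI
  have htr_smul : ∀ m ∈ (IsLocalRing.maximalIdeal R • ⊤ : Submodule R (X ⟶ X)),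
      Θ.tr X m ∈ (IsLocalRing.maximalIdeal R • I : Ideal R) := by
    intro m hm
    refine Submodule.smul_induction_on hm ?_ ?_
    · intro c hc n _
      rw [map_smul]
      exact Submodule.smul_mem_smul hc (Ideal.subset_span ⟨n, rfl⟩)
    · intro x y hx hy
      rw [map_add]; exact add_mem hx hy
  have hIdeal : I = Ideal.span {d} := by
    apply le_antisymm
    · have hmain : I ≤ Ideal.span {d} ⊔ IsLocalRing.maximalIdeal R • I := by
        rw [hI, Ideal.span_le]
        rintro _ ⟨a, rfl⟩
        obtain ⟨r, hr⟩ := hEnd a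
        have : Θ.tr X a = r * d + Θ.tr X (a - r • 𝟙 X) := by
          rw [map_sub, map_smul, smul_eq_mul]; ring
        rw [this]
        exact Submodule.add_mem _
          (Ideal.mem_sup_left (Ideal.mem_span_singleton.2 ⟨r, mul_comm r d⟩))
          (Ideal.mem_sup_right (htr_smul _ hr))
      exact Submodule.le_of_le_smul_of_le_jacobson_bot (IsNoetherian.noetherian I)
        ((IsLocalRing.jacobson_eq_maximalIdeal (⊥ : Ideal R) bot_ne_top).ge) hmain
    · rw [Ideal.span_singleton_le_iff_mem]
      exact Ideal.subset_span ⟨𝟙 X, rfl⟩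
  have hneg : ∀ k : ℕ, IsNegligibleObj Θ (Ideal.span {p} ^ k) X ↔ p ^ k ∣ d := by
    intro k
    constructor
    · intro h
      have := h (𝟙 X)
      rwa [Ideal.span_singleton_pow, Ideal.mem_span_singleton] at this
    · intro h a
      have ha : Θ.tr X a ∈ I := Ideal.subset_span ⟨a, rfl⟩
      rw [hIdeal, Ideal.mem_span_singleton] at ha
      rw [Ideal.span_singleton_pow, Ideal.mem_span_singleton]
      exact h.trans ha
  refine ⟨hIdeal, hneg, ?_⟩
  have hset : {k : ℕ | IsNegligibleObj Θ (Ideal.span {p} ^ k) X} = {k : ℕ | p ^ k ∣ d} :=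
    Set.ext fun k => hneg k
  rw [nullity, hset]
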